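/- Let I ⊆ ℝ be an open interval, let f, g, h : I → ℝ be smooth with f and g nowhere zero, let A, B : ℝ → ℝ be smooth with A nowhere zero, let δ₁, δ₃, ε₁, ε₂, ε₃ be nonzero real constants and δ₂, δ₄ real constants, and let X : I → ℝ be smooth with X′ nowhere zero (so X is a diffeomorphism of I onto the interval J = X(I)). Suppose u : ℝ × I → ℝ is a smooth solution of f(x)u_t = (g(x)A(u)u_x)_x + h(x)B(u)u_x. Define ũ : ℝ × J → ℝ by ũ(δ₁t+δ₂, X(x)) = δ₃u(t,x)+δ₄, and define f̃, g̃, h̃ on J and Ã, B̃ on ℝ by f̃(X(x)) = ε₁δ₁ f(x)/X′(x), g̃(X(x)) = ε₁ε₂⁻¹X′(x)g(x), h̃(X(x)) = ε₁ε₃⁻¹h(x), Ã(δ₃v+δ₄) = ε₂A(v), B̃(δ₃v+δ₄) = ε₃B(v). Then ũ is a smooth solution of f̃(x̃)ũ_t̃ = (g̃(x̃)Ã(ũ)ũ_x̃)_x̃ + h̃(x̃)B̃(ũ)ũ_x̃ on ℝ × J (after the affine reparametrization of time t̃ = δ₁t+δ₂). -/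

import Mathlib

open Set Real Filter
open scoped ContDiff Topology

/-- The usual equivalence group `G∼` of the class
`f(x) u_t = (g(x) A(u) u_x)_x + h(x) B(u) u_x` acts by
`t̃ = δ₁ t + δ₂`, `x̃ = X(x)`, `ũ = δ₃ u + δ₄`,
`f̃ = ε₁ δ₁ f / X'`, `g̃ = ε₁ ε₂⁻¹ X' g`, `h̃ = ε₁ ε₃⁻¹ h`, `Ã = ε₂ A`, `B̃ = ε₃ B`:
every such transformation maps any smooth solution `u` of the original equation to a
smooth solution `ũ` (written `ut` below) of the transformed equation on `ℝ × X(I)`. -/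
theorem usual_equivalence_group_of_diffusion_convection
    (I : Set ℝ) (hIopen : IsOpen I) (hIconn : Convex ℝ I)
    (f g h : ℝ → ℝ)
    (hf : ContDiffOn ℝ ∞ f I) (hg : ContDiffOn ℝ ∞ g I) (hh : ContDiffOn ℝ ∞ h I)
    (hf0 : ∀ x ∈ I, f x ≠ 0) (hg0 : ∀ x ∈ I, g x ≠ 0)
    (A B : ℝ → ℝ) (hA : ContDiff ℝ ∞ A) (hB : ContDiff ℝ ∞ B)
    (hA0 : ∀ v : ℝ, A v ≠ 0)
    (δ₁ δ₂ δ₃ δ₄ ε₁ ε₂ ε₃ : ℝ)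
    (hδ₁ : δ₁ ≠ 0) (hδ₃ : δ₃ ≠ 0) (hε₁ : ε₁ ≠ 0) (hε₂ : ε₂ ≠ 0) (hε₃ : ε₃ ≠ 0)
    (X : ℝ → ℝ) (hX : ContDiffOn ℝ ∞ X I) (hX0 : ∀ x ∈ I, deriv X x ≠ 0)
    (u : ℝ → ℝ → ℝ)
    (hu : ContDiffOn ℝ ∞ (fun p : ℝ × ℝ => u p.1 p.2) (univ ×ˢ I))
    (hpde : ∀ t : ℝ, ∀ x ∈ I,
      f x * deriv (fun s => u s x) t
        = deriv (fun y => g y * A (u t y) * deriv (fun z => u t z) y) x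
          + h x * B (u t x) * deriv (fun y => u t y) x)
    (ut : ℝ → ℝ → ℝ) (ft gt ht At Bt : ℝ → ℝ)
    (hutdef : ∀ t : ℝ, ∀ x ∈ I, ut (δ₁ * t + δ₂) (X x) = δ₃ * u t x + δ₄)
    (hftdef : ∀ x ∈ I, ft (X x) = ε₁ * δ₁ * f x / deriv X x)
    (hgtdef : ∀ x ∈ I, gt (X x) = ε₁ * ε₂⁻¹ * deriv X x * g x)
    (hhtdef : ∀ x ∈ I, ht (X x) = ε₁ * ε₃⁻¹ * h x)
    (hAtdef : ∀ v : ℝ, At (δ₃ * v + δ₄) = ε₂ * A v)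
    (hBtdef : ∀ v : ℝ, Bt (δ₃ * v + δ₄) = ε₃ * B v) :
    ContDiffOn ℝ ∞ (fun p : ℝ × ℝ => ut p.1 p.2) (univ ×ˢ (X '' I))
      ∧ ∀ t : ℝ, ∀ x ∈ I,
          ft (X x) * deriv (fun s => ut s (X x)) (δ₁ * t + δ₂)
            = deriv (fun y => gt y * At (ut (δ₁ * t + δ₂) y)
                * deriv (fun z => ut (δ₁ * t + δ₂) z) y) (X x)
              + ht (X x) * Bt (ut (δ₁ * t + δ₂) (X x))
                * deriv (fun y => ut (δ₁ * t + δ₂) y) (X x) := by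
  have h1n : (∞ : WithTop ℕ∞) ≠ 0 := by simp
  -- local smooth inverses of X
  have master : ∀ x₀ ∈ I, ∃ Y : ℝ → ℝ, ContDiffAt ℝ ∞ Y (X x₀) ∧ Y (X x₀) = x₀ ∧
      HasDerivAt Y (deriv X x₀)⁻¹ (X x₀) ∧
      (∀ᶠ y in 𝓝 (X x₀), X (Y y) = y ∧ Y y ∈ I) := by
    intro x₀ hx₀
    have hXc : ContDiffAt ℝ ∞ X x₀ := hX.contDiffAt (hIopen.mem_nhds hx₀)
    have hd0 : deriv X x₀ ≠ 0 := hX0 x₀ hx₀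
    have hXd : HasDerivAt X (deriv X x₀) x₀ := (hXc.differentiableAt h1n).hasDerivAt
    have hXsd : HasStrictDerivAt X (deriv X x₀) x₀ := hXc.hasStrictDerivAt h1n
    have hfd := hXd.hasFDerivAt_equiv hd0
    set Y : ℝ → ℝ := hXc.localInverse hfd h1n with hYdef
    have hs : HasStrictFDerivAt X
        (ContinuousLinearEquiv.unitsEquivAut ℝ (Units.mk0 (deriv X x₀) hd0) : ℝ →L[ℝ] ℝ) x₀ :=
      hXc.hasStrictFDerivAt' hfd h1n
    have hYc : ContDiffAt ℝ ∞ Y (X x₀) := hXc.to_localInverse hfd h1n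
    have hY0 : Y (X x₀) = x₀ := hXc.localInverse_apply_image hfd h1n
    have hright : ∀ᶠ y in 𝓝 (X x₀), X (Y y) = y := hs.eventually_right_inverse
    have hleft : ∀ᶠ x in 𝓝 x₀, Y (X x) = x := hs.eventually_left_inverse
    have hYd : HasDerivAt Y (deriv X x₀)⁻¹ (X x₀) :=
      (hXsd.to_local_left_inverse hd0 hleft).hasDerivAt
    have hmemI : I ∈ 𝓝 (Y (X x₀)) := by rw [hY0]; exact hIopen.mem_nhds hx₀
    have hmem : ∀ᶠ y in 𝓝 (X x₀), Y y ∈ I := hYc.continuousAt hmemI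
    exact ⟨Y, hYc, hY0, hYd, hright.and hmem⟩
  -- basic smoothness facts about u
  have huAt : ∀ (t : ℝ), ∀ x ∈ I, ContDiffAt ℝ ∞ (fun p : ℝ × ℝ => u p.1 p.2) (t, x) :=
    fun t x hx => hu.contDiffAt (((isOpen_univ.prod hIopen)).mem_nhds ⟨trivial, hx⟩)
  have hu_x : ∀ (t : ℝ), ∀ x ∈ I, ContDiffAt ℝ ∞ (fun z => u t z) x := fun t x hx =>
    (huAt t x hx).comp x (ContDiffAt.prodMk contDiffAt_const contDiffAt_id)
  have hu_t : ∀ (t : ℝ), ∀ x ∈ I, ContDiffAt ℝ ∞ (fun s => u s x) t := fun t x hx =>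
    (huAt t x hx).comp t (ContDiffAt.prodMk contDiffAt_id contDiffAt_const)
  have hu_xOn : ∀ (t : ℝ), ContDiffOn ℝ ∞ (fun z => u t z) I := fun t =>
    hu.comp (ContDiffOn.prodMk contDiffOn_const contDiffOn_id) (fun x hx => ⟨trivial, hx⟩)
  have hderiv_u : ∀ (t : ℝ), ContDiffOn ℝ ∞ (deriv (fun z => u t z)) I := fun t =>
    ((contDiffOn_infty_iff_deriv_of_isOpen hIopen).mp (hu_xOn t)).2
  -- the key spatial derivative of ut
  have key2 : ∀ (t : ℝ), ∀ x' ∈ I, HasDerivAt (fun z => ut (δ₁ * t + δ₂) z)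
      (δ₃ * (deriv (fun z => u t z) x' * (deriv X x')⁻¹)) (X x') := by
    intro t x' hx'
    obtain ⟨Y, hYc, hY0, hYd, hVI⟩ := master x' hx'
    have hud : HasDerivAt (fun z => u t z) (deriv (fun z => u t z) x') (Y (X x')) := by
      rw [hY0]; exact ((hu_x t x' hx').differentiableAt h1n).hasDerivAt
    have hcomp : HasDerivAt (fun z => u t (Y z))
        (deriv (fun z => u t z) x' * (deriv X x')⁻¹) (X x') := hud.comp (X x') hYd
    have hev : (fun z => δ₃ * u t (Y z) + δ₄) =ᶠ[𝓝 (X x')] (fun z => ut (δ₁ * t + δ₂) z) := by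
      filter_upwards [hVI] with z hz
      rw [← hutdef t (Y z) hz.2, hz.1]
    exact (((hcomp.const_mul δ₃).add_const δ₄).congr_of_eventuallyEq hev.symm)
  have key2d : ∀ (t : ℝ), ∀ x' ∈ I, deriv (fun z => ut (δ₁ * t + δ₂) z) (X x')
      = δ₃ * (deriv (fun z => u t z) x' * (deriv X x')⁻¹) := fun t x' hx' =>
    (key2 t x' hx').deriv
  constructor
  · -- smoothness of ut
    rintro ⟨s, y⟩ ⟨-, x₀, hx₀, rfl⟩
    obtain ⟨Y, hYc, hY0, hYd, hVI⟩ := master x₀ hx₀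
    have hupt : ContDiffAt ℝ ∞ (fun p : ℝ × ℝ => u p.1 p.2) (((s - δ₂) / δ₁ : ℝ), Y (X x₀)) := by
      rw [hY0]; exact huAt _ x₀ hx₀
    have hYsnd : ContDiffAt ℝ ∞ (fun p : ℝ × ℝ => Y p.2) (s, X x₀) := by
      exact ContDiffAt.comp (s, X x₀) hYc contDiffAt_snd
    have hinner : ContDiffAt ℝ ∞ (fun p : ℝ × ℝ => (((p.1 - δ₂) / δ₁ : ℝ), Y p.2)) (s, X x₀) :=
      ContDiffAt.prodMk ((contDiffAt_fst.sub contDiffAt_const).div_const δ₁) hYsnd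
    have hwAt : ContDiffAt ℝ ∞ (fun p : ℝ × ℝ => δ₃ * u ((p.1 - δ₂) / δ₁) (Y p.2) + δ₄)
        (s, X x₀) := ((contDiffAt_const.mul (hupt.comp (s, X x₀) hinner)).add contDiffAt_const)
    apply ContDiffAt.contDiffWithinAt
    apply hwAt.congr_of_eventuallyEq
    have hVI2 : ∀ᶠ p : ℝ × ℝ in 𝓝 (s, X x₀), X (Y p.2) = p.2 ∧ Y p.2 ∈ I :=
      (continuous_snd.tendsto (s, X x₀)).eventually hVI
    filter_upwards [hVI2] with p hp
    have : p.1 = δ₁ * ((p.1 - δ₂) / δ₁) + δ₂ := by field_simp; ring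
    calc ut p.1 p.2 = ut (δ₁ * ((p.1 - δ₂) / δ₁) + δ₂) (X (Y p.2)) := by rw [← this, hp.1]
      _ = δ₃ * u ((p.1 - δ₂) / δ₁) (Y p.2) + δ₄ := hutdef _ _ hp.2
  · -- the PDE
    intro t x₀ hx₀
    obtain ⟨Y, hYc, hY0, hYd, hVI⟩ := master x₀ hx₀
    have hXd0 : deriv X x₀ ≠ 0 := hX0 x₀ hx₀
    -- time derivative
    have hutt : HasDerivAt (fun s => u s x₀) (deriv (fun s => u s x₀) t)
        ((δ₁ * t + δ₂ - δ₂) / δ₁) := by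
      rw [show (δ₁ * t + δ₂ - δ₂) / δ₁ = t by field_simp; ring]
      exact ((hu_t t x₀ hx₀).differentiableAt h1n).hasDerivAt
    have hinner : HasDerivAt (fun s : ℝ => (s - δ₂) / δ₁) (1 / δ₁) (δ₁ * t + δ₂) :=
      ((hasDerivAt_id _).sub_const δ₂).div_const δ₁
    have hfun : (fun s => ut s (X x₀)) = fun s => δ₃ * u ((s - δ₂) / δ₁) x₀ + δ₄ := by
      funext s
      rw [← hutdef ((s - δ₂) / δ₁) x₀ hx₀]
      congr 1
      field_simp
      ring
    have deriv1 : deriv (fun s => ut s (X x₀)) (δ₁ * t + δ₂)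
        = δ₃ * (deriv (fun s => u s x₀) t * (1 / δ₁)) := by
      rw [hfun]
      exact (((hutt.comp (δ₁ * t + δ₂) hinner).const_mul δ₃).add_const δ₄).deriv
    -- the flux term
    have hΦdiff : DifferentiableAt ℝ
        (fun x => g x * A (u t x) * deriv (fun z => u t z) x) x₀ := by
      have hgd := (hg.contDiffAt (hIopen.mem_nhds hx₀)).differentiableAt h1n
      have hAd : DifferentiableAt ℝ (fun x => A (u t x)) x₀ :=
        ((hA.contDiffAt.comp x₀ (hu_x t x₀ hx₀))).differentiableAt h1n
      have hdud := (((hderiv_u t).contDiffAt (hIopen.mem_nhds hx₀))).differentiableAt h1n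
      exact (hgd.mul hAd).mul hdud
    have hΦd : HasDerivAt (fun x => g x * A (u t x) * deriv (fun z => u t z) x)
        (deriv (fun x => g x * A (u t x) * deriv (fun z => u t z) x) x₀) (Y (X x₀)) := by
      rw [hY0]; exact hΦdiff.hasDerivAt
    have hFeq : (fun y => gt y * At (ut (δ₁ * t + δ₂) y) * deriv (fun z => ut (δ₁ * t + δ₂) z) y)
        =ᶠ[𝓝 (X x₀)] (fun y => ε₁ * δ₃ *
          ((fun x => g x * A (u t x) * deriv (fun z => u t z) x) (Y y))) := by
      filter_upwards [hVI] with y hy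
      have hy1 : X (Y y) = y := hy.1
      have hy2 : Y y ∈ I := hy.2
      have e1 : gt y = ε₁ * ε₂⁻¹ * deriv X (Y y) * g (Y y) := by
        conv_lhs => rw [← hy1]
        exact hgtdef _ hy2
      have e2 : At (ut (δ₁ * t + δ₂) y) = ε₂ * A (u t (Y y)) := by
        conv_lhs => rw [← hy1]
        rw [hutdef t _ hy2, hAtdef]
      have e3 : deriv (fun z => ut (δ₁ * t + δ₂) z) y
          = δ₃ * (deriv (fun z => u t z) (Y y) * (deriv X (Y y))⁻¹) := by
        conv_lhs => rw [← hy1]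
        exact key2d t _ hy2
      rw [e1, e2, e3]
      have hd0 : deriv X (Y y) ≠ 0 := hX0 _ hy2
      field_simp
    have hbig : deriv (fun y => gt y * At (ut (δ₁ * t + δ₂) y)
          * deriv (fun z => ut (δ₁ * t + δ₂) z) y) (X x₀)
        = ε₁ * δ₃ * (deriv (fun x => g x * A (u t x) * deriv (fun z => u t z) x) x₀
            * (deriv X x₀)⁻¹) := by
      rw [hFeq.deriv_eq]
      exact ((hΦd.comp (X x₀) hYd).const_mul (ε₁ * δ₃)).deriv
    have hBt : Bt (ut (δ₁ * t + δ₂) (X x₀)) = ε₃ * B (u t x₀) := by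
      rw [hutdef t x₀ hx₀, hBtdef]
    rw [hftdef x₀ hx₀, hhtdef x₀ hx₀, deriv1, hbig, key2d t x₀ hx₀, hBt]
    have hpde' := hpde t x₀ hx₀
    field_simp
    linear_combination hpde'
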